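/- Let F be the Randers norm on ℝ² given by F(x₁,x₂) = √(x₁² + x₂²) + b·x₁ with |b| < 1. Then F is a gauge, and its associated gauge is F_a(x₁,x₂) = (1/(1-b²))·√((1-b²)x₁² + x₂²) − (b/(1-b²))·x₂. -/

import Mathlib

noncomputable section

/-- The determinant form `[x,y] = x₁y₂ − x₂y₁`. -/
def det2 (x y : ℝ × ℝ) : ℝ := x.1 * y.2 - x.2 * y.1

/-- A gauge (convex distance function) on ℝ². -/
def IsGauge (F : ℝ × ℝ → ℝ) : Prop :=
  (∀ x, 0 ≤ F x) ∧ (∀ x, F x = 0 ↔ x = 0) ∧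
  (∀ (l : ℝ) (x : ℝ × ℝ), 0 < l → F (l • x) = l * F x) ∧
  (∀ x y, F (x + y) ≤ F x + F y)

/-- The associated gauge `F_a(x) = sup {[y,x] : F(y) = 1}`. -/
def assocGauge (F : ℝ × ℝ → ℝ) (x : ℝ × ℝ) : ℝ :=
  sSup {d : ℝ | ∃ y, F y = 1 ∧ d = det2 y x}

/-- The Randers norm `F(x₁,x₂) = √(x₁²+x₂²) + b·x₁`. -/
def randers (b : ℝ) (x : ℝ × ℝ) : ℝ := Real.sqrt (x.1 ^ 2 + x.2 ^ 2) + b * x.1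

lemma abs_le_sqrt' (a c : ℝ) : |a| ≤ Real.sqrt (a ^ 2 + c ^ 2) := by
  rw [← Real.sqrt_sq_eq_abs]
  exact Real.sqrt_le_sqrt (by nlinarith [sq_nonneg c])

lemma randers_nonneg (b : ℝ) (hb : |b| < 1) (x : ℝ × ℝ) : 0 ≤ randers b x := by
  obtain ⟨hb1, hb2⟩ := abs_lt.mp hb
  have h1 := abs_le_sqrt' x.1 x.2
  obtain ⟨h2, h3⟩ := abs_le.mp h1
  unfold randers
  nlinarith [mul_nonneg (by linarith : (0:ℝ) ≤ 1 + b) (by linarith : 0 ≤ Real.sqrt (x.1^2+x.2^2) + x.1),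
    mul_nonneg (by linarith : (0:ℝ) ≤ 1 - b) (by linarith : 0 ≤ Real.sqrt (x.1^2+x.2^2) - x.1)]

lemma randers_isGauge (b : ℝ) (hb : |b| < 1) : IsGauge (randers b) := by
  obtain ⟨hb1, hb2⟩ := abs_lt.mp hb
  refine ⟨randers_nonneg b hb, ?_, ?_, ?_⟩
  · intro x
    constructor
    · intro h
      have h1 := abs_le_sqrt' x.1 x.2
      have hs : Real.sqrt (x.1 ^ 2 + x.2 ^ 2) = -(b * x.1) := by
        unfold randers at h; linarith
      have hx1 : x.1 = 0 := by
        have hbb : -(b * x.1) ≤ |b| * |x.1| := by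
          calc -(b * x.1) ≤ |b * x.1| := neg_le_abs _
          _ = |b| * |x.1| := abs_mul b x.1
        have := abs_nonneg x.1
        have : |x.1| = 0 := by nlinarith [hs ▸ h1]
        exact abs_eq_zero.mp this
      have hx2 : x.2 = 0 := by
        rw [hx1] at hs
        simp at hs
        have := Real.sqrt_eq_zero'.mp (by simpa using hs)
        nlinarith [sq_nonneg x.2]
      exact Prod.ext hx1 hx2
    · rintro rfl; simp [randers]
  · intro l x hl
    have e1 : (l • x).1 = l * x.1 := rfl
    have e2 : (l • x).2 = l * x.2 := rfl
    unfold randers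
    rw [e1, e2, show (l*x.1)^2 + (l*x.2)^2 = l^2 * (x.1^2 + x.2^2) from by ring,
      Real.sqrt_mul (sq_nonneg l), Real.sqrt_sq hl.le]
    ring
  · intro x y
    unfold randers
    have e1 : (x + y).1 = x.1 + y.1 := rfl
    have e2 : (x + y).2 = x.2 + y.2 := rfl
    rw [e1, e2]
    set A := Real.sqrt (x.1^2 + x.2^2) with hA
    set B := Real.sqrt (y.1^2 + y.2^2) with hB
    have hA0 : 0 ≤ A := Real.sqrt_nonneg _
    have hB0 : 0 ≤ B := Real.sqrt_nonneg _
    have hA2 : A^2 = x.1^2 + x.2^2 := Real.sq_sqrt (by positivity)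
    have hB2 : B^2 = y.1^2 + y.2^2 := Real.sq_sqrt (by positivity)
    have hCS : x.1*y.1 + x.2*y.2 ≤ A * B := by
      nlinarith [sq_nonneg (x.1*y.2 - x.2*y.1), mul_nonneg hA0 hB0,
        sq_nonneg (A*B - (x.1*y.1 + x.2*y.2)), sq_nonneg (A*B + (x.1*y.1 + x.2*y.2))]
    have htri : Real.sqrt ((x.1+y.1)^2 + (x.2+y.2)^2) ≤ A + B := by
      rw [show A + B = Real.sqrt ((A+B)^2) from (Real.sqrt_sq (by linarith)).symm]
      exact Real.sqrt_le_sqrt (by nlinarith)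
    linarith

lemma randers_assoc (b : ℝ) (hb : |b| < 1) (x : ℝ × ℝ) :
    assocGauge (randers b) x =
      (1 / (1 - b ^ 2)) * Real.sqrt ((1 - b ^ 2) * x.1 ^ 2 + x.2 ^ 2)
        - (b / (1 - b ^ 2)) * x.2 := by
  obtain ⟨hb1, hb2⟩ := abs_lt.mp hb
  have hc : 0 < 1 - b ^ 2 := by nlinarith
  set c := 1 - b ^ 2 with hcdef
  set K := Real.sqrt (c * x.1 ^ 2 + x.2 ^ 2) with hKdef
  have hK0 : 0 ≤ K := Real.sqrt_nonneg _
  have hK2 : K ^ 2 = c * x.1 ^ 2 + x.2 ^ 2 := Real.sq_sqrt (by positivity)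
  clear_value c K
  have hub : ∀ d ∈ {d : ℝ | ∃ y, randers b y = 1 ∧ d = det2 y x},
      d ≤ (1 / c) * K - (b / c) * x.2 := by
    rintro d ⟨y, hy, rfl⟩
    have hr2 : Real.sqrt (y.1 ^ 2 + y.2 ^ 2) ^ 2 = y.1 ^ 2 + y.2 ^ 2 :=
      Real.sq_sqrt (by positivity)
    have hs : Real.sqrt (y.1 ^ 2 + y.2 ^ 2) = 1 - b * y.1 := by
      unfold randers at hy; linarith
    have hsq : y.1 ^ 2 + y.2 ^ 2 = (1 - b * y.1) ^ 2 := by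
      calc y.1 ^ 2 + y.2 ^ 2 = Real.sqrt (y.1 ^ 2 + y.2 ^ 2) ^ 2 := hr2.symm
      _ = (1 - b * y.1) ^ 2 := by rw [hs]
    have hpq : (c * y.1 + b) ^ 2 + c * y.2 ^ 2 = 1 := by
      rw [hcdef]; linear_combination (1 - b ^ 2) * hsq
    have hL : K ^ 2 - ((y.1 * x.2 - y.2 * x.1) * c + b * x.2) ^ 2
        = c * ((c * y.1 + b) * x.1 + y.2 * x.2) ^ 2 := by
      linear_combination hK2 - (c * x.1 ^ 2 + x.2 ^ 2) * hpq
    have hLK : (y.1 * x.2 - y.2 * x.1) * c + b * x.2 ≤ K := by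
      nlinarith [hL, hK0, mul_nonneg hc.le (sq_nonneg ((c * y.1 + b) * x.1 + y.2 * x.2))]
    unfold det2
    rw [div_mul_eq_mul_div, div_mul_eq_mul_div, div_sub_div_same, le_div_iff₀ hc]
    linarith
  have hne : {d : ℝ | ∃ y, randers b y = 1 ∧ d = det2 y x}.Nonempty := by
    refine ⟨det2 (0, 1) x, (0, 1), ?_, rfl⟩
    simp [randers]
  by_cases hx : x = 0
  · subst hx
    have h0 : {d : ℝ | ∃ y, randers b y = 1 ∧ d = det2 y 0} = {0} := by
      ext d
      simp only [Set.mem_setOf_eq, Set.mem_singleton_iff]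
      constructor
      · rintro ⟨y, hy, rfl⟩; simp [det2]
      · rintro rfl; exact ⟨(0, 1), by simp [randers], by simp [det2]⟩
    have hKz : K = 0 := by rw [hKdef]; norm_num
    unfold assocGauge
    rw [h0, csSup_singleton, hKz]
    simp
  · have hKpos : 0 < K := by
      have hx12 : x.1 ≠ 0 ∨ x.2 ≠ 0 := by
        by_contra h'
        push_neg at h'
        exact hx (Prod.ext h'.1 h'.2)
      have hpos : 0 < c * x.1 ^ 2 + x.2 ^ 2 := by
        rcases hx12 with h | h
        · nlinarith [mul_pos hc (sq_pos_of_ne_zero h), sq_nonneg x.2]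
        · nlinarith [sq_pos_of_ne_zero h, mul_nonneg hc.le (sq_nonneg x.1)]
      rw [hKdef]; exact Real.sqrt_pos.mpr hpos
    set y : ℝ × ℝ := (x.2 / (c * K) - b / c, -x.1 / K) with hydef
    clear_value y
    have hy1 : y.1 = x.2 / (c * K) - b / c := by rw [hydef]
    have hy2 : y.2 = -x.1 / K := by rw [hydef]
    have hx2K : |x.2| ≤ K := by
      rw [← Real.sqrt_sq_eq_abs, hKdef]
      exact Real.sqrt_le_sqrt (by nlinarith [sq_nonneg x.1])
    have hbx : b * x.2 < K := by
      have h1 : |b| * |x.2| ≤ |b| * K := mul_le_mul_of_nonneg_left hx2K (abs_nonneg b)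
      have h2 : |b| * K < 1 * K := mul_lt_mul_of_pos_right hb hKpos
      calc b * x.2 ≤ |b * x.2| := le_abs_self _
      _ = |b| * |x.2| := abs_mul _ _
      _ < 1 * K := by linarith
      _ = K := one_mul K
    have hkey : 1 - b * y.1 = (K - b * x.2) / (c * K) := by
      rw [hy1]
      field_simp
      linear_combination K * hcdef
    have hpos1 : 0 < 1 - b * y.1 := by
      rw [hkey]
      exact div_pos (by linarith) (mul_pos hc hKpos)
    have e : c * y.1 + b = x.2 / K := by
      rw [hy1]; field_simp; ring
    have hpq' : (c * y.1 + b) ^ 2 + c * y.2 ^ 2 = 1 := by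
      rw [e, hy2, show (x.2 / K) ^ 2 + c * (-x.1 / K) ^ 2
          = (x.2 ^ 2 + c * x.1 ^ 2) / K ^ 2 from by ring,
        show x.2 ^ 2 + c * x.1 ^ 2 = K ^ 2 from by linarith,
        div_self (pow_ne_zero 2 hKpos.ne')]
    have hsq' : y.1 ^ 2 + y.2 ^ 2 = (1 - b * y.1) ^ 2 := by
      have h := hpq'
      rw [hcdef] at h
      have h2 : (1 - b ^ 2) * (y.1 ^ 2 + y.2 ^ 2) = (1 - b ^ 2) * (1 - b * y.1) ^ 2 := by
        linear_combination h
      exact mul_left_cancel₀ (ne_of_gt (by nlinarith)) h2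
    have hFy : randers b y = 1 := by
      unfold randers
      rw [hsq', Real.sqrt_sq hpos1.le]
      ring
    have hdet : det2 y x = (1 / c) * K - (b / c) * x.2 := by
      unfold det2
      rw [hy1, hy2]
      field_simp
      linear_combination (-1 : ℝ) * hK2
    unfold assocGauge
    refine le_antisymm (csSup_le hne hub) ?_
    rw [← hdet]
    exact le_csSup ⟨_, hub⟩ ⟨y, hFy, rfl⟩


theorem randers_assocGauge (b : ℝ) (hb : |b| < 1) :
    IsGauge (randers b) ∧
      ∀ x : ℝ × ℝ, assocGauge (randers b) x =
        (1 / (1 - b ^ 2)) * Real.sqrt ((1 - b ^ 2) * x.1 ^ 2 + x.2 ^ 2)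
          - (b / (1 - b ^ 2)) * x.2 := by
  exact ⟨randers_isGauge b hb, fun x => randers_assoc b hb x⟩
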